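/- Let A(0) and A(1) be the 3×3 matrices with rows (1,0,0),(0,1,0),(1,1,0) and (1,0,1),(0,1,1),(0,0,1) respectively. For y ∈ {0,1}^ℕ, the sequence of matrices (A(y_1), A(y_2), …) satisfies condition (C) for some choice of 0 ≤ λ < 1 ≤ Λ < +∞ and integers 0 = s_0 = s_1 < s_2 < … if and only if y contains infinitely many 0's and infinitely many 1's (equivalently, no shifted tail σ^n·y equals the constant sequence 000⋯ or the constant sequence 111⋯). -/

import Mathlib

open Matrix Filter Finset Topology

/-- ℓ¹-norm (sum of absolute values of the entries) of a vector. -/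
noncomputable def l1 {d : ℕ} (v : Fin d → ℝ) : ℝ := ∑ i, |v i|

/-- Normalization of a vector by its ℓ¹-norm. -/
noncomputable def nrm {d : ℕ} (v : Fin d → ℝ) : Fin d → ℝ := (l1 v)⁻¹ • v

/-- The `j`-th column of a matrix, i.e. `A ⬝ U_j`. -/
def colv {d1 d2 : ℕ} (A : Matrix (Fin d1) (Fin d2) ℝ) (j : Fin d2) : Fin d1 → ℝ :=
  fun i => A i j

/-- Probability vector: nonnegative entries summing to `1`. -/
def probVec {d : ℕ} (X : Fin d → ℝ) : Prop := (∀ i, 0 ≤ X i) ∧ ∑ i, X i = 1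

/-- Class `H1`: any two columns have comparable supports. -/
def memH1 {d1 d2 : ℕ} (A : Matrix (Fin d1) (Fin d2) ℝ) : Prop :=
  ∀ j0 j1 : Fin d2, (∀ i, A i j0 ≠ 0 → A i j1 ≠ 0) ∨ (∀ i, A i j1 ≠ 0 → A i j0 ≠ 0)

/-- Class `H2(Λ)`: `A i0 j0 ≠ 0` implies `‖A U_{j0}‖ ≤ Λ · A i0 j0`. -/
def memH2 {d1 d2 : ℕ} (L : ℝ) (A : Matrix (Fin d1) (Fin d2) ℝ) : Prop :=
  ∀ i0 j0, A i0 j0 ≠ 0 → (∑ i, A i j0) ≤ L * A i0 j0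

/-- Class `H3(λ)`: `A i0 j0 ≠ 0` and `A i0 j1 = 0` imply `‖A U_{j1}‖ ≤ λ · A i0 j0`. -/
def memH3 {d1 d2 : ℕ} (l : ℝ) (A : Matrix (Fin d1) (Fin d2) ℝ) : Prop :=
  ∀ i0 j0 j1, A i0 j0 ≠ 0 → A i0 j1 = 0 → (∑ i, A i j1) ≤ l * A i0 j0

/-- `blockProd A m n = A (m+1) * A (m+2) * ⋯ * A n` (identity if `n ≤ m`). -/
noncomputable def blockProd {d : ℕ} (A : ℕ → Matrix (Fin d) (Fin d) ℝ) (m n : ℕ) :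
    Matrix (Fin d) (Fin d) ℝ :=
  ((List.range (n - m)).map fun i => A (m + 1 + i)).prod

/-- Condition (C) w.r.t. `0 ≤ lam < 1 ≤ Lam` and the sequence `s` with
`0 = s 0 = s 1 < s 2 < ⋯`: for every `n ≥ s 2`, with `k = k(n)` the index such that
`s (k+1) ≤ n < s (k+2)`, the product `Q n = A (s k + 1) ⋯ A n` belongs to
`H1 ∩ H2(Lam) ∩ H3(lam)`. -/
def condC {d : ℕ} (A : ℕ → Matrix (Fin d) (Fin d) ℝ) (lam Lam : ℝ) (s : ℕ → ℕ) : Prop :=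
  s 0 = 0 ∧ s 1 = 0 ∧ (∀ k, 1 ≤ k → s k < s (k + 1)) ∧
    ∀ n k, s 2 ≤ n → s (k + 1) ≤ n → n < s (k + 2) →
      memH1 (blockProd A (s k) n) ∧ memH2 Lam (blockProd A (s k) n) ∧
        memH3 lam (blockProd A (s k) n)

/-- The two 3×3 matrices of the Kamae measure: `A(0)` and `A(1)`. -/
noncomputable def kamaeA : Fin 2 → Matrix (Fin 3) (Fin 3) ℝ :=
  ![!![1, 0, 0; 0, 1, 0; 1, 1, 0], !![1, 0, 1; 0, 1, 1; 0, 0, 1]]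

namespace KamaeAux

lemma blockProd_same {d : ℕ} (A : ℕ → Matrix (Fin d) (Fin d) ℝ) (m n : ℕ) (h : n ≤ m) :
    blockProd A m n = 1 := by
  have : n - m = 0 := by omega
  simp [blockProd, this]

lemma blockProd_succ {d : ℕ} (A : ℕ → Matrix (Fin d) (Fin d) ℝ) {m n : ℕ} (h : m ≤ n) :
    blockProd A m (n + 1) = blockProd A m n * A (n + 1) := by
  unfold blockProd
  have h1 : n + 1 - m = (n - m) + 1 := by omega
  have h2 : m + 1 + (n - m) = n + 1 := by omega
  rw [h1, List.range_succ, List.map_append, List.prod_append]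
  simp [h2]

lemma blockProd_split {d : ℕ} (A : ℕ → Matrix (Fin d) (Fin d) ℝ) {m p : ℕ} (hmp : m ≤ p) :
    ∀ n, p ≤ n → blockProd A m n = blockProd A m p * blockProd A p n := by
  intro n hn
  induction n, hn using Nat.le_induction with
  | base => rw [blockProd_same A p p le_rfl, mul_one]
  | succ n hn ih =>
      rw [blockProd_succ A (hmp.trans hn), ih, blockProd_succ A hn, mul_assoc]

lemma kamaeA_nonneg (c : Fin 2) (i j : Fin 3) : 0 ≤ kamaeA c i j := by
  fin_cases c <;> fin_cases i <;> fin_cases j <;> norm_num [kamaeA]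

lemma kamaeA_rowsum (c : Fin 2) (i : Fin 3) : 1 ≤ ∑ j, kamaeA c i j := by
  fin_cases c <;> fin_cases i <;> norm_num [kamaeA, Fin.sum_univ_three, Matrix.cons_val_two, Matrix.vecHead, Matrix.vecTail]

lemma P3_eq : kamaeA 1 * kamaeA 0 = !![2,1,0;1,2,0;1,1,0] := by
  ext i j
  fin_cases i <;> fin_cases j <;>
    norm_num [kamaeA, Matrix.mul_apply, Fin.sum_univ_three, Matrix.cons_val_two, Matrix.vecHead, Matrix.vecTail]



lemma one_entry_nonneg {d : ℕ} (i j : Fin d) : (0:ℝ) ≤ (1 : Matrix (Fin d) (Fin d) ℝ) i j := by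
  rw [Matrix.one_apply]; split <;> norm_num

lemma one_rowsum {d : ℕ} [NeZero d] (i : Fin d) :
    ∑ j, (1 : Matrix (Fin d) (Fin d) ℝ) i j = 1 := by
  simp [Matrix.one_apply]

lemma mul_props {Q B : Matrix (Fin 3) (Fin 3) ℝ}
    (hQ : ∀ i j, 0 ≤ Q i j) (hQr : ∀ i, 1 ≤ ∑ j, Q i j)
    (hB : ∀ i j, 0 ≤ B i j) (hBr : ∀ i, 1 ≤ ∑ j, B i j) :
    (∀ i j, 0 ≤ (Q * B) i j) ∧ (∀ i, 1 ≤ ∑ j, (Q * B) i j) := by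
  constructor
  · intro i j
    rw [Matrix.mul_apply]
    exact Finset.sum_nonneg fun l _ => mul_nonneg (hQ i l) (hB l j)
  · intro i
    have h : ∑ j, (Q * B) i j = ∑ l, Q i l * ∑ j, B l j := by
      simp only [Matrix.mul_apply]
      rw [Finset.sum_comm]
      simp [Finset.mul_sum]
    rw [h]
    calc (1:ℝ) ≤ ∑ j, Q i j := hQr i
    _ ≤ ∑ l, Q i l * ∑ j, B l j :=
        Finset.sum_le_sum fun l _ => le_mul_of_one_le_right (hQ i l) (hBr l)

lemma bp_props (y : ℕ → Fin 2) (m : ℕ) (n : ℕ) :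
    (∀ i j, 0 ≤ blockProd (fun l => kamaeA (y (l - 1))) m n i j) ∧
      (∀ i, 1 ≤ ∑ j, blockProd (fun l => kamaeA (y (l - 1))) m n i j) := by
  induction n with
  | zero =>
      rw [blockProd_same _ _ _ (Nat.zero_le m)]
      exact ⟨fun i j => one_entry_nonneg i j, fun i => (one_rowsum i).ge⟩
  | succ n ih =>
      by_cases h : m ≤ n
      · rw [blockProd_succ _ h]
        exact mul_props ih.1 ih.2 (kamaeA_nonneg _) (kamaeA_rowsum _)
      · rw [blockProd_same _ _ _ (by omega)]
        exact ⟨fun i j => one_entry_nonneg i j, fun i => (one_rowsum i).ge⟩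

lemma Hall (U R : Matrix (Fin 3) (Fin 3) ℝ) (Lam : ℝ)
    (hU : ∀ i j, 0 ≤ U i j) (hUr : ∀ i, 1 ≤ ∑ j, U i j)
    (hR : ∀ i j, 0 ≤ R i j)
    (hLam : 2 * (∑ p, ∑ q, U p q) ≤ Lam) :
    memH1 (U * (!![2,1,0;1,2,0;1,1,0] * R)) ∧
    memH2 Lam (U * (!![2,1,0;1,2,0;1,1,0] * R)) ∧
    memH3 0 (U * (!![2,1,0;1,2,0;1,1,0] * R)) := by
  set P : Matrix (Fin 3) (Fin 3) ℝ := !![2,1,0;1,2,0;1,1,0] with hPdef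
  set Q := U * (P * R) with hQdef
  have hs0 : ∀ j : Fin 3, 0 ≤ R 0 j + R 1 j := fun j => add_nonneg (hR 0 j) (hR 1 j)
  have hPR_lb : ∀ (j : Fin 3) (m : Fin 3), R 0 j + R 1 j ≤ (P * R) m j := by
    intro j m
    fin_cases m <;>
      simp [hPdef, Matrix.mul_apply, Fin.sum_univ_three, Matrix.vecHead, Matrix.vecTail] <;>
      nlinarith [hR 0 j, hR 1 j, hR 2 j]
  have hPR_ub : ∀ (j : Fin 3) (m : Fin 3), (P * R) m j ≤ 2 * (R 0 j + R 1 j) := by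
    intro j m
    fin_cases m <;>
      simp [hPdef, Matrix.mul_apply, Fin.sum_univ_three, Matrix.vecHead, Matrix.vecTail] <;>
      nlinarith [hR 0 j, hR 1 j, hR 2 j]
  have hlow : ∀ (j i : Fin 3), R 0 j + R 1 j ≤ Q i j := by
    intro j i
    have hQij : Q i j = ∑ m, U i m * (P * R) m j := by rw [hQdef, Matrix.mul_apply]
    rw [hQij]
    calc R 0 j + R 1 j = 1 * (R 0 j + R 1 j) := (one_mul _).symm
    _ ≤ (∑ m, U i m) * (R 0 j + R 1 j) := mul_le_mul_of_nonneg_right (hUr i) (hs0 j)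
    _ = ∑ m, U i m * (R 0 j + R 1 j) := Finset.sum_mul _ _ _
    _ ≤ ∑ m, U i m * (P * R) m j :=
        Finset.sum_le_sum fun m _ => mul_le_mul_of_nonneg_left (hPR_lb j m) (hU i m)
  have hQ0 : ∀ i j, 0 ≤ Q i j := fun i j => (hs0 j).trans (hlow j i)
  have hupper : ∀ j : Fin 3, ∑ i, Q i j ≤ 2 * (∑ p, ∑ q, U p q) * (R 0 j + R 1 j) := by
    intro j
    have h : ∑ i, Q i j = ∑ i, ∑ m, U i m * (P * R) m j := by
      simp [hQdef, Matrix.mul_apply]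
    rw [h]
    calc ∑ i, ∑ m, U i m * (P * R) m j
        ≤ ∑ i, ∑ m, U i m * (2 * (R 0 j + R 1 j)) := by
          refine Finset.sum_le_sum fun i _ => Finset.sum_le_sum fun m _ => ?_
          exact mul_le_mul_of_nonneg_left (hPR_ub j m) (hU i m)
    _ = 2 * (∑ p, ∑ q, U p q) * (R 0 j + R 1 j) := by
          simp only [← Finset.sum_mul]; ring
  have hUsum0 : (0:ℝ) ≤ ∑ p, ∑ q, U p q :=
    Finset.sum_nonneg fun p _ => Finset.sum_nonneg fun q _ => hU p q
  have hLam0 : (0:ℝ) ≤ Lam := le_trans (by linarith) hLam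
  have hzerocol : ∀ j : Fin 3, R 0 j + R 1 j = 0 → ∀ i, Q i j = 0 := by
    intro j hj i
    have h1 : ∑ i', Q i' j ≤ 0 := by
      have := hupper j; rw [hj] at this; simpa using this
    have h2 : Q i j ≤ ∑ i', Q i' j :=
      Finset.single_le_sum (fun i' _ => hQ0 i' j) (Finset.mem_univ i)
    linarith [hQ0 i j]
  refine ⟨?_, ?_, ?_⟩
  · intro j0 j1
    by_cases h : R 0 j1 + R 1 j1 = 0
    · right; intro i hi; exact absurd (hzerocol j1 h i) hi
    · left; intro i _
      have hpos : 0 < R 0 j1 + R 1 j1 := lt_of_le_of_ne (hs0 j1) (Ne.symm h)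
      exact ne_of_gt (lt_of_lt_of_le hpos (hlow j1 i))
  · intro i0 j0 _
    calc ∑ i, Q i j0 ≤ 2 * (∑ p, ∑ q, U p q) * (R 0 j0 + R 1 j0) := hupper j0
    _ ≤ Lam * (R 0 j0 + R 1 j0) := mul_le_mul_of_nonneg_right hLam (hs0 j0)
    _ ≤ Lam * Q i0 j0 := mul_le_mul_of_nonneg_left (hlow j0 i0) hLam0
  · intro i0 j0 j1 _ h1
    have hz : R 0 j1 + R 1 j1 = 0 := le_antisymm (h1 ▸ hlow j1 i0) (hs0 j1)
    rw [zero_mul]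
    calc ∑ i, Q i j1 ≤ 2 * (∑ p, ∑ q, U p q) * (R 0 j1 + R 1 j1) := hupper j1
    _ = 0 := by rw [hz, mul_zero]

lemma const_block (y : ℕ → Fin 2) (c : Fin 2) (m : ℕ) :
    ∀ n, m < n → (∀ i, m ≤ i → i < n → y i = c) →
    (blockProd (fun l => kamaeA (y (l - 1))) m n) 0 0 = 1 ∧
    (blockProd (fun l => kamaeA (y (l - 1))) m n) 0 1 = 0 ∧
    (blockProd (fun l => kamaeA (y (l - 1))) m n) 1 0 = 0 ∧
    (blockProd (fun l => kamaeA (y (l - 1))) m n) 1 1 = 1 ∧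
    (c = 0 → (blockProd (fun l => kamaeA (y (l - 1))) m n) 0 2 = 0 ∧
      (blockProd (fun l => kamaeA (y (l - 1))) m n) 1 2 = 0) := by
  intro n hn
  induction n, hn using Nat.le_induction with
  | base =>
      intro hc
      have h1 : blockProd (fun l => kamaeA (y (l - 1))) m (m+1) = kamaeA c := by
        rw [blockProd_succ _ le_rfl, blockProd_same _ _ _ le_rfl, one_mul]
        simp [hc m le_rfl (by omega)]
      rw [h1]
      fin_cases c <;> norm_num [kamaeA, Matrix.cons_val_two, Matrix.vecHead, Matrix.vecTail]
  | succ n hn ih =>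
      intro hc
      have hyn : y n = c := hc n (by omega) (by omega)
      obtain ⟨e00, e01, e10, e11, e2⟩ := ih (fun i h1 h2 => hc i h1 (by omega))
      rw [blockProd_succ _ (by omega : m ≤ n)]
      set Q := blockProd (fun l => kamaeA (y (l - 1))) m n with hQ
      simp only [Nat.add_sub_cancel, hyn]
      fin_cases c
      · obtain ⟨e02, e12⟩ := e2 rfl
        refine ⟨?_, ?_, ?_, ?_, fun _ => ⟨?_, ?_⟩⟩ <;>
          simp [Matrix.mul_apply, Fin.sum_univ_three, kamaeA, e00, e01, e10, e11, e02, e12,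
            Matrix.vecHead, Matrix.vecTail]
      · refine ⟨?_, ?_, ?_, ?_, fun h => absurd h (by decide)⟩ <;>
          simp [Matrix.mul_apply, Fin.sum_univ_three, kamaeA, e00, e01, e10, e11,
            Matrix.vecHead, Matrix.vecTail]

end KamaeAux
/-- **Proposition 7.2.** The sequence `(A(y_1), A(y_2), …)` satisfies condition (C)
(for some `0 ≤ λ < 1 ≤ Λ` and some sequence `(s_k)`) if and only if `y` contains
infinitely many `0`'s and infinitely many `1`'s. -/
theorem kamae_condC_iff (y : ℕ → Fin 2) :
    (∃ (lam Lam : ℝ) (s : ℕ → ℕ), 0 ≤ lam ∧ lam < 1 ∧ 1 ≤ Lam ∧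
      condC (fun n => kamaeA (y (n - 1))) lam Lam s) ↔
    ((∀ N : ℕ, ∃ n, N ≤ n ∧ y n = 0) ∧ (∀ N : ℕ, ∃ n, N ≤ n ∧ y n = 1)) := by
  constructor
  · rintro ⟨lam, Lam, s, -, hlam1, -, hs0, hs1, hmono, hmain⟩
    have fin2 : ∀ v : Fin 2, v ≠ 0 → v = 1 := by decide
    have fin2' : ∀ v : Fin 2, v ≠ 1 → v = 0 := by decide
    have claim : ∀ (c : Fin 2) (N : ℕ), (∀ i, N ≤ i → y i = c) → False := by
      intro c N hyc
      have smono : ∀ a b, 1 ≤ a → a ≤ b → s a ≤ s b := by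
        intro a b ha hab
        induction b, hab using Nat.le_induction with
        | base => exact le_rfl
        | succ b hb ih => exact le_trans ih (le_of_lt (hmono b (by omega)))
      have sge : ∀ k, k ≤ s (k + 1) := by
        intro k
        induction k with
        | zero => omega
        | succ k ih => have := hmono (k + 1) (by omega); omega
      have h2n : s 2 ≤ s (N + 1 + 1) := smono 2 (N + 1 + 1) (by omega) (by omega)
      have hkn : s (N + 1) < s (N + 1 + 1) := hmono (N + 1) (by omega)
      obtain ⟨H1, -, -⟩ :=
        hmain (s (N + 1 + 1)) (N + 1) h2n le_rfl (hmono (N + 1 + 1) (by omega))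
      have hNsk : N ≤ s (N + 1) := sge N
      obtain ⟨e00, e01, e10, e11, -⟩ :=
        KamaeAux.const_block y c (s (N + 1)) (s (N + 1 + 1)) hkn
          (fun i h1 _ => hyc i (by omega))
      rcases H1 0 1 with h | h
      · exact (h 0 (by rw [e00]; norm_num)) e01
      · exact (h 1 (by rw [e11]; norm_num)) e10
    constructor
    · intro N
      by_contra hcon
      push_neg at hcon
      exact claim 1 N fun i hi => fin2 (y i) (hcon i hi)
    · intro N
      by_contra hcon
      push_neg at hcon
      exact claim 0 N fun i hi => fin2' (y i) (hcon i hi)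
  · rintro ⟨h0, h1⟩
    classical
    have fin2 : ∀ v : Fin 2, v ≠ 0 → v = 1 := by decide
    have key : ∀ N : ℕ, ∃ n, N ≤ n ∧ y n = 1 ∧ y (n + 1) = 0 := by
      intro N
      obtain ⟨a, hNa, ha1⟩ := h1 N
      obtain ⟨b, hab, hb0⟩ := h0 (a + 1)
      have hex : ∃ m, a < m ∧ y m = 0 := ⟨b, by omega, hb0⟩
      obtain ⟨hm1, hm2⟩ := Nat.find_spec hex
      set m := Nat.find hex with hm
      refine ⟨m - 1, by omega, ?_, ?_⟩
      · rcases Nat.lt_or_ge a (m - 1) with hlt | hge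
        · have hmin := Nat.find_min hex (show m - 1 < m by omega)
          push_neg at hmin
          exact fin2 _ (hmin hlt)
        · have : m - 1 = a := by omega
          rw [this]; exact ha1
      · have : m - 1 + 1 = m := by omega
        rw [this]; exact hm2
    choose g hg1 hg2 hg3 using key
    set t : ℕ → ℕ := fun k => Nat.rec (g 0) (fun _ p => g (p + 2)) k with htdef
    have ht1 : ∀ k, y (t k) = 1 := by
      intro k; cases k with
      | zero => exact hg2 0
      | succ k => exact hg2 (t k + 2)
    have ht0 : ∀ k, y (t k + 1) = 0 := by
      intro k; cases k with
      | zero => exact hg3 0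
      | succ k => exact hg3 (t k + 2)
    have htm : ∀ k, t k + 2 ≤ t (k + 1) := fun k => hg1 (t k + 2)
    set s : ℕ → ℕ := fun k => if k ≤ 1 then 0 else t (k - 1) with hsdef
    have hsv : ∀ k, 2 ≤ k → s k = t (k - 1) := by
      intro k hk; simp only [hsdef]; rw [if_neg (by omega)]
    -- the fixed "prefix" matrix and its entry sum
    set N1 : ℝ := ∑ p, ∑ q, (blockProd (fun l => kamaeA (y (l - 1))) 0 (t 0)) p q with hN1
    have hN1nn : 0 ≤ N1 := by
      rw [hN1]
      exact Finset.sum_nonneg fun p _ => Finset.sum_nonneg fun q _ =>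
        (KamaeAux.bp_props y 0 (t 0)).1 p q
    have hone_sum : (∑ p, ∑ q, (1 : Matrix (Fin 3) (Fin 3) ℝ) p q) = 3 := by
      simp [Matrix.one_apply]
    refine ⟨0, 2 * N1 + 6, s, le_rfl, by norm_num, by linarith, ?_, ?_, ?_, ?_⟩
    · simp [hsdef]
    · simp [hsdef]
    · intro k hk
      rcases Nat.lt_or_ge k 2 with hk2 | hk2
      · have hk1 : k = 1 := by omega
        subst hk1
        have : s 1 = 0 := by simp [hsdef]
        rw [this, hsv 2 le_rfl]
        have h01 : t 0 + 2 ≤ t 1 := htm 0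
        show 0 < t 1
        omega
      · rw [hsv k hk2, hsv (k + 1) (by omega)]
        have h := htm (k - 1)
        have hke : k - 1 + 1 = k := by omega
        rw [hke] at h
        show t (k - 1) < t k
        omega
    · intro n k h2 hlo hhi
      have hk1 : 1 ≤ k := by
        by_contra hc
        have : k = 0 := by omega
        subst this
        have h' : n < s 2 := hhi
        omega
      rcases Nat.lt_or_ge k 2 with hk2 | hk2
      · -- k = 1 : window starts at 0, use prefix U = blockProd 0 (t 0)
        have hk1' : k = 1 := by omega
        subst hk1'
        have hs1' : s 1 = 0 := by simp [hsdef]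
        have hs2' : s 2 = t 1 := hsv 2 le_rfl
        have h01 : t 0 + 2 ≤ t 1 := htm 0
        have h2' : t 1 ≤ n := by rw [hs2'] at h2; exact h2
        have hτn : t 0 + 2 ≤ n := by omega
        have hsplit : blockProd (fun l => kamaeA (y (l - 1))) 0 n =
            blockProd (fun l => kamaeA (y (l - 1))) 0 (t 0) *
              (blockProd (fun l => kamaeA (y (l - 1))) (t 0) (t 0 + 2) *
                blockProd (fun l => kamaeA (y (l - 1))) (t 0 + 2) n) := by
          rw [← KamaeAux.blockProd_split _ (by omega) n (by omega),
            ← KamaeAux.blockProd_split _ (Nat.zero_le _) n (by omega)]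
        have hmid : blockProd (fun l => kamaeA (y (l - 1))) (t 0) (t 0 + 2) =
            !![2,1,0;1,2,0;1,1,0] := by
          rw [show t 0 + 2 = (t 0 + 1) + 1 from rfl,
            KamaeAux.blockProd_succ _ (by omega),
            KamaeAux.blockProd_succ _ le_rfl,
            KamaeAux.blockProd_same _ _ _ le_rfl, one_mul]
          have e1 : t 0 + 1 - 1 = t 0 := by omega
          have e2 : t 0 + 1 + 1 - 1 = t 0 + 1 := by omega
          rw [e1, e2, ht1 0, ht0 0]
          exact KamaeAux.P3_eq
        rw [hs1', hsplit, hmid]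
        exact KamaeAux.Hall _ _ _ (KamaeAux.bp_props y 0 (t 0)).1
          (KamaeAux.bp_props y 0 (t 0)).2 (KamaeAux.bp_props y (t 0 + 2) n).1
          (by rw [← hN1]; linarith)
      · -- k ≥ 2 : window starts exactly at a "10" position
        have hτ : s k = t (k - 1) := hsv k hk2
        have hke : k - 1 + 1 = k := by omega
        have hmk : t (k - 1) + 2 ≤ t k := by have h := htm (k - 1); rw [hke] at h; exact h
        have hs1k : s (k + 1) = t k := by rw [hsv (k + 1) (by omega)]; simp only [Nat.add_sub_cancel]
        have hτn : t (k - 1) + 2 ≤ n := by rw [hs1k] at hlo; omega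
        have hsplit : blockProd (fun l => kamaeA (y (l - 1))) (t (k-1)) n =
            blockProd (fun l => kamaeA (y (l - 1))) (t (k-1)) (t (k-1) + 2) *
              blockProd (fun l => kamaeA (y (l - 1))) (t (k-1) + 2) n :=
          KamaeAux.blockProd_split _ (by omega) n (by omega)
        have hmid : blockProd (fun l => kamaeA (y (l - 1))) (t (k-1)) (t (k-1) + 2) =
            !![2,1,0;1,2,0;1,1,0] := by
          rw [show t (k-1) + 2 = (t (k-1) + 1) + 1 from rfl,
            KamaeAux.blockProd_succ _ (by omega),
            KamaeAux.blockProd_succ _ le_rfl,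
            KamaeAux.blockProd_same _ _ _ le_rfl, one_mul]
          have e1 : t (k-1) + 1 - 1 = t (k-1) := by omega
          have e2 : t (k-1) + 1 + 1 - 1 = t (k-1) + 1 := by omega
          rw [e1, e2, ht1 (k-1), ht0 (k-1)]
          exact KamaeAux.P3_eq
        rw [hτ, hsplit, hmid, ← one_mul (!![(2:ℝ),1,0;1,2,0;1,1,0] *
          blockProd (fun l => kamaeA (y (l - 1))) (t (k-1) + 2) n)]
        exact KamaeAux.Hall _ _ _ (fun i j => KamaeAux.one_entry_nonneg i j)
          (fun i => (KamaeAux.one_rowsum i).ge) (KamaeAux.bp_props y (t (k-1) + 2) n).1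
          (by rw [hone_sum]; linarith)
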